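/- Let (R, m, k) be a commutative Noetherian local ring and let x, y ∈ R be two socle elements (i.e., m·x = m·y = 0) whose images in the k-vector space soc(R) = (0 :_R m) are linearly independent. For each natural number n ≥ 1, let A_n be the n × (n+1) matrix over R with A[i][i] = x, A[i][i+1] = y, and all other entries 0. Then the R-module Z_n = R^(n+1) / (row space of A_n) is indecomposable. -/

import Mathlib

open IsLocalRing

lemma auxE {R : Type*} [CommRing R] [IsLocalRing R] {M : Type*} [AddCommGroup M] [Module R M]
    {N N' : Submodule R M} (hdis : Disjoint N N') (hfg : N.FG)
    {ι : Type*} [Fintype ι] {e a b : ι → M}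
    (hg : ∀ z : M, ∃ v : ι → R, z = ∑ k, v k • e k)
    (hab : ∀ i, e i = a i + b i)
    (haN : ∀ i, a i ∈ N) (hbN : ∀ i, b i ∈ N')
    {w : ι → ι → R} (hw : ∀ i k, w i k ∈ maximalIdeal R)
    (hwa : ∀ i, a i = ∑ k, w i k • e k) :
    N = ⊥ := by
  have hzero : ∀ z ∈ N, ∀ z' ∈ N', z = z' → z = 0 := by
    intro z hz z' hz' hzz'
    have : z ∈ N ⊓ N' := ⟨hz, hzz' ▸ hz'⟩
    rwa [hdis.eq_bot, Submodule.mem_bot] at this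
  have comb : ∀ (v : ι → R) (z : M), z ∈ N → z = ∑ k, v k • e k → z = ∑ k, v k • a k := by
    intro v z hz hv
    have h1 : z - ∑ k, v k • a k = ∑ k, v k • b k := by
      rw [hv, ← Finset.sum_sub_distrib]
      refine Finset.sum_congr rfl fun k _ => ?_
      rw [← smul_sub, hab k, add_sub_cancel_left]
    have h2 : z - ∑ k, v k • a k = 0 :=
      hzero _ (Submodule.sub_mem _ hz (Submodule.sum_mem _ fun k _ => Submodule.smul_mem _ _ (haN k)))
        _ (Submodule.sum_mem _ fun k _ => Submodule.smul_mem _ _ (hbN k)) h1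
    rw [sub_eq_zero] at h2
    exact h2
  have aInmN : ∀ i, a i ∈ (maximalIdeal R) • N := by
    intro i
    rw [comb (w i) (a i) (haN i) (hwa i)]
    exact Submodule.sum_mem _ fun k _ => Submodule.smul_mem_smul (hw i k) (haN k)
  have Nleq : N ≤ (maximalIdeal R) • N := by
    intro z hz
    obtain ⟨v, hv⟩ := hg z
    rw [comb v z hz hv]
    exact Submodule.sum_mem _ fun k _ => Submodule.smul_mem _ _ (aInmN k)
  exact Submodule.eq_bot_of_le_smul_of_le_jacobson_bot (maximalIdeal R) N hfg Nleq
    (IsLocalRing.jacobson_eq_maximalIdeal ⊥ bot_ne_top).ge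

lemma sumCast {R : Type*} [CommRing R] {n : ℕ} (c : Fin n → R)
    (E : Fin (n+1) → Fin (n+1) → R) (hE : ∀ i j, E i j = if i = j then (1:R) else 0) :
    (∑ l : Fin n, c l • E l.castSucc) = Fin.snoc c 0 := by
  funext j
  rw [Finset.sum_apply]
  simp only [Pi.smul_apply, smul_eq_mul, hE, mul_ite, mul_one, mul_zero]
  induction j using Fin.lastCases with
  | last =>
    rw [Fin.snoc_last]
    refine Finset.sum_eq_zero fun l _ => ?_
    rw [if_neg (Fin.castSucc_lt_last l).ne]
  | cast j' =>
    rw [Fin.snoc_castSucc]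
    simp only [Fin.castSucc_inj]
    rw [Finset.sum_ite_eq' Finset.univ j' c, if_pos (Finset.mem_univ _)]

lemma sumSucc {R : Type*} [CommRing R] {n : ℕ} (c : Fin n → R)
    (E : Fin (n+1) → Fin (n+1) → R) (hE : ∀ i j, E i j = if i = j then (1:R) else 0) :
    (∑ l : Fin n, c l • E l.succ) = Fin.cons 0 c := by
  funext j
  rw [Finset.sum_apply]
  simp only [Pi.smul_apply, smul_eq_mul, hE, mul_ite, mul_one, mul_zero]
  induction j using Fin.cases with
  | zero =>
    rw [Fin.cons_zero]
    refine Finset.sum_eq_zero fun l _ => ?_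
    rw [if_neg (Fin.succ_ne_zero l)]
  | succ j' =>
    rw [Fin.cons_succ]
    simp only [Fin.succ_inj]
    rw [Finset.sum_ite_eq' Finset.univ j' c, if_pos (Finset.mem_univ _)]

theorem stmt6 (R : Type*) [CommRing R] [IsNoetherianRing R] [IsLocalRing R]
    (x y : R)
    (hx : ∀ a ∈ IsLocalRing.maximalIdeal R, a * x = 0)
    (hy : ∀ a ∈ IsLocalRing.maximalIdeal R, a * y = 0)
    (hind : ∀ a b : R, a * x + b * y = 0 →
      a ∈ IsLocalRing.maximalIdeal R ∧ b ∈ IsLocalRing.maximalIdeal R)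
    (n : ℕ) (hn : 1 ≤ n)
    (A : Matrix (Fin n) (Fin (n + 1)) R)
    (hA : ∀ i j, A i j = if j = i.castSucc then x else if j = i.succ then y else 0) :
    Nontrivial ((Fin (n + 1) → R) ⧸ Submodule.span R (Set.range fun i => A i)) ∧
    ∀ N N' : Submodule R ((Fin (n + 1) → R) ⧸ Submodule.span R (Set.range fun i => A i)),
      IsCompl N N' → N = ⊥ ∨ N' = ⊥ := by
  set m := IsLocalRing.maximalIdeal R with hm
  set W := Submodule.span R (Set.range fun i => A i) with hWdef
  obtain ⟨hym, hxm'⟩ := hind y (-x) (by ring)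
  have hxm : x ∈ m := by have := neg_mem hxm'; rwa [neg_neg] at this
  have hWm : ∀ w ∈ W, ∀ j, w j ∈ m := by
    intro w hw
    refine Submodule.span_induction ?_ ?_ ?_ ?_ hw
    · rintro _ ⟨i, rfl⟩ j
      show A i j ∈ m
      rw [hA]
      split_ifs <;> first | exact hxm | exact hym | exact zero_mem m
    · intro j; simp only [Pi.zero_apply]; exact zero_mem m
    · intro v v' _ _ h1 h2 j
      exact add_mem (h1 j) (h2 j)
    · intro r v _ h1 j
      exact Ideal.mul_mem_left m r (h1 j)
  have hWne : W ≠ ⊤ := by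
    intro h
    have h1 : (fun _ => (1:R)) ∈ W := h ▸ Submodule.mem_top
    have := hWm _ h1 0
    exact (IsLocalRing.maximalIdeal.isMaximal R).ne_top
      (Ideal.eq_top_of_isUnit_mem _ this isUnit_one)
  refine ⟨(by rw [Submodule.Quotient.nontrivial_iff]; exact hWne), ?_⟩
  intro N N' hc
  -- the standard basis
  set E : Fin (n+1) → (Fin (n+1) → R) := fun i j => if i = j then (1:R) else 0 with hEdef
  have hE : ∀ i j, E i j = if i = j then (1:R) else 0 := fun i j => rfl
  -- decompose the images of the basis vectors
  have hdecomp : ∀ i : Fin (n+1), ∃ u : Fin (n+1) → R,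
      W.mkQ u ∈ N ∧ W.mkQ (E i) - W.mkQ u ∈ N' := by
    intro i
    have hmem : W.mkQ (E i) ∈ N ⊔ N' := by rw [hc.sup_eq_top]; exact Submodule.mem_top
    obtain ⟨a, ha, b, hb, hab⟩ := Submodule.mem_sup.mp hmem
    obtain ⟨u, hu⟩ := W.mkQ_surjective a
    exact ⟨u, hu ▸ ha, by rw [hu, ← hab, add_sub_cancel_left]; exact hb⟩
  choose u huN huN' using hdecomp
  -- expressing mkQ of any vector in terms of the basis
  have hEsum : ∀ v : Fin (n+1) → R, W.mkQ v = ∑ k, v k • W.mkQ (E k) := by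
    intro v
    conv_lhs => rw [pi_eq_sum_univ v]
    rw [map_sum]
    exact Finset.sum_congr rfl fun k _ => by rw [map_smul]
  have hEmkQ : ∀ k, W.mkQ (E k) = W.mkQ (u k) + (W.mkQ (E k) - W.mkQ (u k)) := by
    intro k; abel
  -- the rows of A
  have hArow : ∀ i : Fin n, A i = x • E i.castSucc + y • E i.succ := by
    intro i; funext j
    rw [hA]
    simp only [Pi.add_apply, Pi.smul_apply, smul_eq_mul, hE, mul_ite, mul_one, mul_zero]
    by_cases h1 : j = i.castSucc
    · subst h1
      simp [(Fin.castSucc_lt_succ (i := i)).ne, (Fin.castSucc_lt_succ (i := i)).ne']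
    · by_cases h2 : j = i.succ
      · subst h2
        simp [h1, (Fin.castSucc_lt_succ (i := i)).ne, fun h => h1 (Eq.symm h)]
      · rw [if_neg h1, if_neg h2, if_neg (fun h => h1 (Eq.symm h)),
          if_neg (fun h => h2 (Eq.symm h)), add_zero]
  -- the key relations: x • u_{i} + y • u_{i+1} lies in W
  have hkeyW : ∀ i : Fin n, x • u i.castSucc + y • u i.succ ∈ W := by
    intro i
    have h0 : W.mkQ (A i) = 0 := (Submodule.Quotient.mk_eq_zero W).mpr
      (Submodule.subset_span ⟨i, rfl⟩)
    have h1 : x • W.mkQ (E i.castSucc) + y • W.mkQ (E i.succ) = 0 := by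
      rw [← map_smul, ← map_smul, ← map_add, ← hArow, h0]
    have h2 : (x • W.mkQ (u i.castSucc) + y • W.mkQ (u i.succ)) +
        (x • (W.mkQ (E i.castSucc) - W.mkQ (u i.castSucc)) +
         y • (W.mkQ (E i.succ) - W.mkQ (u i.succ))) = 0 := by
      rw [← h1]; rw [smul_sub, smul_sub]; abel
    have h3 : (x • W.mkQ (u i.castSucc) + y • W.mkQ (u i.succ)) ∈ N :=
      Submodule.add_mem _ (Submodule.smul_mem _ _ (huN _)) (Submodule.smul_mem _ _ (huN _))
    have h4 : (x • (W.mkQ (E i.castSucc) - W.mkQ (u i.castSucc)) +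
        y • (W.mkQ (E i.succ) - W.mkQ (u i.succ))) ∈ N' :=
      Submodule.add_mem _ (Submodule.smul_mem _ _ (huN' _)) (Submodule.smul_mem _ _ (huN' _))
    have h5 : (x • W.mkQ (u i.castSucc) + y • W.mkQ (u i.succ)) ∈ N ⊓ N' := by
      refine ⟨h3, ?_⟩
      have : x • W.mkQ (u i.castSucc) + y • W.mkQ (u i.succ) =
          -(x • (W.mkQ (E i.castSucc) - W.mkQ (u i.castSucc)) +
            y • (W.mkQ (E i.succ) - W.mkQ (u i.succ))) := by
        rw [eq_neg_iff_add_eq_zero]; exact h2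
      rw [this]; exact neg_mem h4
    rw [hc.disjoint.eq_bot, Submodule.mem_bot] at h5
    have h6 : W.mkQ (x • u i.castSucc + y • u i.succ) = 0 := by
      rw [map_add, map_smul, map_smul]; exact h5
    rw [Submodule.mkQ_apply] at h6
    rwa [Submodule.Quotient.mk_eq_zero W] at h6
  -- extract the coefficient functions
  have hcomb : ∀ i : Fin n, ∃ c : Fin n → R,
      ∑ l, c l • A l = x • u i.castSucc + y • u i.succ := by
    intro i
    exact (Submodule.mem_span_range_iff_exists_fun R).mp (hkeyW i)
  choose c hcc using hcomb
  -- coordinatewise congruences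
  have hcoord : ∀ (i : Fin n) (j : Fin (n+1)),
      (u i.castSucc j - (Fin.snoc (c i) (0:R) : Fin (n+1) → R) j) ∈ m ∧ (u i.succ j - (Fin.cons (0:R) (c i) : Fin (n+1) → R) j) ∈ m := by
    intro i j
    have h1 : ∑ l, c i l • A l = x • (Fin.snoc (c i) (0:R) : Fin (n+1) → R)
        + y • (Fin.cons (0:R) (c i) : Fin (n+1) → R) := by
      calc ∑ l, c i l • A l = ∑ l, c i l • (x • E l.castSucc + y • E l.succ) := by
            exact Finset.sum_congr rfl fun l _ => by rw [hArow]
        _ = x • (∑ l, c i l • E l.castSucc) + y • (∑ l, c i l • E l.succ) := by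
            rw [Finset.smul_sum, Finset.smul_sum, ← Finset.sum_add_distrib]
            refine Finset.sum_congr rfl fun l _ => ?_
            rw [smul_add, smul_comm (c i l) x, smul_comm (c i l) y]
        _ = x • (Fin.snoc (c i) (0:R) : Fin (n+1) → R)
            + y • (Fin.cons (0:R) (c i) : Fin (n+1) → R) := by
            rw [sumCast (c i) E hE, sumSucc (c i) E hE]
    have h2 : x • u i.castSucc + y • u i.succ
        = x • (Fin.snoc (c i) (0:R) : Fin (n+1) → R)
        + y • (Fin.cons (0:R) (c i) : Fin (n+1) → R) := by
      rw [← hcc i, h1]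
    have h3 := congrFun h2 j
    simp only [Pi.add_apply, Pi.smul_apply, smul_eq_mul] at h3
    refine hind _ _ ?_
    ring_nf
    linear_combination h3
  have hB' : ∀ i : Fin n, u i.castSucc (Fin.last n) ∈ m := by
    intro i
    have := (hcoord i (Fin.last n)).1
    rwa [Fin.snoc_last, sub_zero] at this
  have hC' : ∀ i : Fin n, u i.succ 0 ∈ m := by
    intro i
    have := (hcoord i 0).2
    rwa [Fin.cons_zero, sub_zero] at this
  have hDg : ∀ i j : Fin n, u i.succ j.succ - u i.castSucc j.castSucc ∈ m := by
    intro i j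
    have h1 := (hcoord i j.castSucc).1
    have h2 := (hcoord i j.succ).2
    rw [Fin.snoc_castSucc] at h1
    rw [Fin.cons_succ] at h2
    have := sub_mem h2 h1
    rwa [sub_sub_sub_cancel_right] at this
  -- entries below the diagonal are in m
  have hlow : ∀ q' p : Fin (n+1), q' < p → u p q' ∈ m := by
    intro q'
    induction q' using Fin.induction with
    | zero =>
      intro p hp
      obtain ⟨i, rfl⟩ := Fin.eq_succ_of_ne_zero hp.ne'
      exact hC' i
    | succ j IH =>
      intro p hp
      have hp0 : p ≠ 0 := by
        intro h; rw [h] at hp; exact (Fin.not_lt_zero _) hp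
      obtain ⟨i, rfl⟩ := Fin.eq_succ_of_ne_zero hp0
      have hlt : j.castSucc < i.castSucc := by
        rw [Fin.castSucc_lt_castSucc_iff]
        exact Fin.succ_lt_succ_iff.mp hp
      have h1 := hDg i j
      have h2 := IH i.castSucc hlt
      have := add_mem h1 h2
      rwa [sub_add_cancel] at this
  -- entries above the diagonal are in m
  have hup : ∀ q' p : Fin (n+1), p < q' → u p q' ∈ m := by
    intro q'
    induction q' using Fin.reverseInduction with
    | last =>
      intro p hp
      obtain ⟨i, rfl⟩ := Fin.exists_castSucc_eq.mpr hp.ne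
      exact hB' i
    | cast j IH =>
      intro p hp
      obtain ⟨i, rfl⟩ := Fin.exists_castSucc_eq.mpr (hp.trans (Fin.castSucc_lt_last j)).ne
      have hlt : i.succ < j.succ := by
        rw [Fin.succ_lt_succ_iff]
        exact Fin.castSucc_lt_castSucc_iff.mp hp
      have h1 := hDg i j
      have h2 := IH i.succ hlt
      have := sub_mem h2 h1
      rwa [sub_sub_cancel] at this
  -- diagonal entries are congruent to u 0 0
  have hdg2 : ∀ p : Fin (n+1), u p p - u 0 0 ∈ m := by
    intro p
    induction p using Fin.induction with
    | zero => simpa using zero_mem m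
    | succ i IH =>
      have h1 := hDg i i
      have := add_mem h1 IH
      rwa [sub_add_sub_cancel] at this
  -- idempotency modulo m: u 0 0 is idempotent mod m
  have hNid : W.mkQ (u 0) = ∑ k, u 0 k • W.mkQ (u k) := by
    have h1 : W.mkQ (u 0) - ∑ k, u 0 k • W.mkQ (u k)
        = ∑ k, u 0 k • (W.mkQ (E k) - W.mkQ (u k)) := by
      rw [hEsum (u 0), ← Finset.sum_sub_distrib]
      exact Finset.sum_congr rfl fun k _ => by rw [smul_sub]
    have h2 : W.mkQ (u 0) - ∑ k, u 0 k • W.mkQ (u k) ∈ N :=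
      Submodule.sub_mem _ (huN 0) (Submodule.sum_mem _ fun k _ =>
        Submodule.smul_mem _ _ (huN k))
    have h3 : W.mkQ (u 0) - ∑ k, u 0 k • W.mkQ (u k) ∈ N' := by
      rw [h1]
      exact Submodule.sum_mem _ fun k _ => Submodule.smul_mem _ _ (huN' k)
    have h4 : W.mkQ (u 0) - ∑ k, u 0 k • W.mkQ (u k) ∈ N ⊓ N' := ⟨h2, h3⟩
    rw [hc.disjoint.eq_bot, Submodule.mem_bot, sub_eq_zero] at h4
    exact h4
  have hWmem : u 0 - ∑ k, u 0 k • u k ∈ W := by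
    have h1 : W.mkQ (u 0 - ∑ k, u 0 k • u k) = 0 := by
      rw [map_sub, map_sum, hNid]
      rw [sub_eq_zero]
      exact Finset.sum_congr rfl fun k _ => by rw [map_smul]
    rw [Submodule.mkQ_apply] at h1
    rwa [Submodule.Quotient.mk_eq_zero W] at h1
  have hlam : u 0 0 - ∑ k, u 0 k * u k 0 ∈ m := by
    have := hWm _ hWmem 0
    simpa only [Pi.sub_apply, Finset.sum_apply, Pi.smul_apply, smul_eq_mul] using this
  have hlam2 : u 0 0 - u 0 0 * u 0 0 ∈ m := by
    have hrest : (∑ k, u 0 k * u k 0) - u 0 0 * u 0 0 ∈ m := by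
      rw [← Finset.add_sum_erase _ _ (Finset.mem_univ 0), add_sub_cancel_left]
      refine Submodule.sum_mem _ fun k hk => ?_
      have hk0 : (0 : Fin (n+1)) < k := by
        rcases Fin.pos_iff_ne_zero.mpr (Finset.ne_of_mem_erase hk) with h
        exact h
      exact Ideal.mul_mem_left m _ (hlow 0 k hk0)
    have := add_mem hlam hrest
    rwa [sub_add_sub_cancel] at this
  -- case split on u 0 0 mod m
  have hNZ : IsNoetherian R ((Fin (n + 1) → R) ⧸ W) :=
    isNoetherian_of_surjective W.mkQ (LinearMap.range_eq_top.mpr W.mkQ_surjective)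
  have hgen : ∀ z : (Fin (n + 1) → R) ⧸ W, ∃ v : Fin (n+1) → R,
      z = ∑ k, v k • W.mkQ (E k) := by
    intro z
    obtain ⟨v, rfl⟩ := W.mkQ_surjective z
    exact ⟨v, hEsum v⟩
  have hprime := (IsLocalRing.maximalIdeal.isMaximal R).isPrime
  have hcase : u 0 0 ∈ m ∨ 1 - u 0 0 ∈ m := by
    have hmul : u 0 0 * (1 - u 0 0) ∈ m := by
      have : u 0 0 * (1 - u 0 0) = u 0 0 - u 0 0 * u 0 0 := by ring
      rw [this]; exact hlam2
    rcases hprime.mem_or_mem hmul with h | h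
    · exact Or.inl h
    · exact Or.inr h
  rcases hcase with hlc | hlc
  · -- all entries of u are in m, so N = ⊥
    left
    have hall : ∀ p k : Fin (n+1), u p k ∈ m := by
      intro p k
      rcases lt_trichotomy p k with h | h | h
      · exact hup k p h
      · subst h
        have := add_mem (hdg2 p) hlc
        rwa [sub_add_cancel] at this
      · exact hlow k p h
    exact auxE hc.disjoint (IsNoetherian.noetherian N) hgen hEmkQ huN huN'
      (w := fun i k => u i k) hall (fun i => hEsum (u i))
  · -- all entries of E - u are in m, so N' = ⊥
    right
    have hall : ∀ p k : Fin (n+1), E p k - u p k ∈ m := by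
      intro p k
      rcases lt_trichotomy p k with h | h | h
      · rw [hE, if_neg h.ne, zero_sub]
        exact neg_mem (hup k p h)
      · subst h
        rw [hE, if_pos rfl]
        have := sub_mem hlc (hdg2 p)
        rwa [sub_sub_sub_cancel_right] at this
      · rw [hE, if_neg h.ne', zero_sub]
        exact neg_mem (hlow k p h)
    have hab' : ∀ k, W.mkQ (E k) = (W.mkQ (E k) - W.mkQ (u k)) + W.mkQ (u k) := by
      intro k; abel
    have hwa' : ∀ i, W.mkQ (E i) - W.mkQ (u i) = ∑ k, (E i k - u i k) • W.mkQ (E k) := by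
      intro i
      rw [hEsum (E i), hEsum (u i), ← Finset.sum_sub_distrib]
      exact Finset.sum_congr rfl fun k _ => by rw [sub_smul]
    exact auxE hc.disjoint.symm (IsNoetherian.noetherian N') hgen hab' huN' huN
      (w := fun i k => E i k - u i k) hall hwa'
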